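/- arXiv:2203.08046 — 2 statements merged into one kernel-verified Lean document; each statement's English description precedes it below -/
import Mathlib

section
/- Let the EMI be a single plane wave from direction (φ̄, θ̄) equal to the source direction, so R = a a^H with a_n = e^{i k(φ̄,θ̄)^T u_n} and h_sr = √β_sr · a. Then for the phase configuration Φ maximizing |h_rd^T Φ h_sr| (i.e., φ_n = −arg([h_sr]_n [h_rd]_n)), the EMI term satisfies ‖h_rd^T Φ R^{1/2}‖² = |h_rd^T Φ h_sr|² / β_sr, i.e., the EMI is beamformed toward the destination exactly like the desired signal, and the SINR is upper bounded by p β_sr / σ_emi² regardless of N. -/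
open Matrix ComplexOrder Finset Real

theorem key_emi {N : ℕ} (a w : Fin N → ℂ) (S : Matrix (Fin N) (Fin N) ℂ) (hS : S.PosSemidef)
    (hS2 : S * S = vecMulVec a (star a)) :
    ∑ i, ‖(w ᵥ* S) i‖ ^ 2 = ‖w ⬝ᵥ a‖ ^ 2 := by
  have h1 : (w ᵥ* S) ⬝ᵥ star (w ᵥ* S) = (w ⬝ᵥ a) * star (w ⬝ᵥ a) := by
    rw [star_vecMul, hS.1.eq, dotProduct_mulVec, vecMul_vecMul, hS2]
    simp only [vecMul, vecMulVec_apply, dotProduct, Finset.sum_mul, Finset.mul_sum,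
      Pi.star_apply, star_sum, star_mul']
    exact Finset.sum_congr rfl fun x _ => Finset.sum_congr rfl fun y _ => by ring
  have h2 : ((∑ i, ‖(w ᵥ* S) i‖ ^ 2 : ℝ) : ℂ) = ((‖w ⬝ᵥ a‖ ^ 2 : ℝ) : ℂ) := by
    rw [Complex.ofReal_sum]
    simp only [Complex.sq_norm, ← Complex.mul_conj]
    exact h1
  exact_mod_cast h2

/-- Rank-one EMI from the source direction: with `R = a aᴴ`, `h_sr = √β_sr a`, and the
signal-maximizing phase configuration `Φ`, the EMI term satisfies
`‖h_rd^T Φ R^{1/2}‖² = |h_rd^T Φ h_sr|²/β_sr`, so the SINR is at most `p β_sr/σ_emi²`. -/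
theorem rank_one_emi_source_aligned {N : ℕ} (a h_rd : Fin N → ℂ) (βsr : ℝ) (hβsr : 0 < βsr)
    (S : Matrix (Fin N) (Fin N) ℂ) (hS : S.PosSemidef)
    (hS2 : S * S = vecMulVec a (star a)) :
    (∑ i, ‖(h_rd ᵥ* (Matrix.diagonal (fun n =>
          Complex.exp (Complex.I * (-(Complex.arg (((Real.sqrt βsr : ℂ) * a n) * h_rd n)))))
        * S)) i‖ ^ 2)
      = ‖h_rd ⬝ᵥ (Matrix.diagonal (fun n =>
          Complex.exp (Complex.I * (-(Complex.arg (((Real.sqrt βsr : ℂ) * a n) * h_rd n)))))).mulVec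
            (fun n => (Real.sqrt βsr : ℂ) * a n)‖ ^ 2 / βsr ∧
    ∀ p σemi2 σ2 : ℝ, 0 ≤ p → 0 < σemi2 → 0 ≤ σ2 →
      p * ‖h_rd ⬝ᵥ (Matrix.diagonal (fun n =>
            Complex.exp (Complex.I * (-(Complex.arg (((Real.sqrt βsr : ℂ) * a n) * h_rd n)))))).mulVec
              (fun n => (Real.sqrt βsr : ℂ) * a n)‖ ^ 2
          / (σemi2 * (∑ i, ‖(h_rd ᵥ* (Matrix.diagonal (fun n =>
              Complex.exp (Complex.I * (-(Complex.arg (((Real.sqrt βsr : ℂ) * a n) * h_rd n)))))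
            * S)) i‖ ^ 2) + σ2)
        ≤ p * βsr / σemi2 := by
  set Φ : Matrix (Fin N) (Fin N) ℂ := Matrix.diagonal (fun n =>
      Complex.exp (Complex.I * (-(Complex.arg (((Real.sqrt βsr : ℂ) * a n) * h_rd n))))) with hΦ
  set w : Fin N → ℂ := h_rd ᵥ* Φ with hw
  have hvm : h_rd ᵥ* (Φ * S) = w ᵥ* S := by rw [hw, vecMul_vecMul]
  have hemi : (∑ i, ‖(h_rd ᵥ* (Φ * S)) i‖ ^ 2)
      = ‖w ⬝ᵥ a‖ ^ 2 := by rw [hvm]; exact key_emi a w S hS hS2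
  have hsig : ‖h_rd ⬝ᵥ Φ.mulVec (fun n => (Real.sqrt βsr : ℂ) * a n)‖ ^ 2
      = βsr * ‖w ⬝ᵥ a‖ ^ 2 := by
    rw [dotProduct_mulVec, ← hw]
    have : w ⬝ᵥ (fun n => (Real.sqrt βsr : ℂ) * a n)
        = (Real.sqrt βsr : ℂ) * (w ⬝ᵥ a) := by
      simp [dotProduct, Finset.mul_sum]; exact Finset.sum_congr rfl fun x _ => by ring
    rw [this, norm_mul, mul_pow, Complex.norm_real, Real.norm_eq_abs,
      abs_of_nonneg (Real.sqrt_nonneg _), Real.sq_sqrt hβsr.le]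
  refine ⟨by rw [hemi, hsig]; field_simp, ?_⟩
  intro p σemi2 σ2 hp hσemi hσ2
  rw [hemi, hsig]
  set t := ‖w ⬝ᵥ a‖ ^ 2 with ht
  have htn : 0 ≤ t := sq_nonneg _
  rcases eq_or_lt_of_le (by positivity : (0:ℝ) ≤ σemi2 * t + σ2) with h | h
  · rw [← h, div_zero]; positivity
  · rw [div_le_div_iff₀ h hσemi]
    nlinarith [mul_nonneg (mul_nonneg hp hβsr.le) hσ2]
end

section
/- Let α₂ > 0 and α₁(σ_emi²) = β_sr/(σ_emi² + σ²) with β_sr, σ² > 0. Then for any fixed R̄ > 0, the minimal total power p*(σ_emi²) = min_{τ∈(0,1)} [τ(2^{R̄/τ}−1)/α₁(σ_emi²) + (1−τ)(2^{R̄/(1−τ)}−1)/α₂] is strictly increasing and unbounded in σ_emi², and p*(σ_emi²) ≥ σ_emi² · (min_{τ} τ(2^{R̄/τ}−1))/β_sr grows at least linearly in σ_emi². -/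
open Real Filter

private lemma rpow_sub_one_ge (x : ℝ) (hx : 0 ≤ x) :
    Real.log 2 * x ≤ (2:ℝ) ^ x - 1 := by
  have h : (2:ℝ) ^ x = Real.exp (Real.log 2 * x) := by
    rw [Real.rpow_def_of_pos (by norm_num)]
  rw [h]
  linarith [Real.add_one_le_exp (Real.log 2 * x)]

/-- The optimized DF transmit power
`p*(s) = min_{τ∈(0,1)} [τ(2^{R̄/τ}−1)(s+σ²)/β_sr + (1−τ)(2^{R̄/(1−τ)}−1)/α₂]`
(where `α₁(s) = β_sr/(s+σ²)` is the EMI-degraded first-hop gain) is strictly increasing and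
unbounded in the EMI power `s = σ_emi²`, and grows at least linearly:
`p*(s) ≥ s ⋅ (min_τ τ(2^{R̄/τ}−1))/β_sr`. -/
theorem df_power_degrades_linearly_in_emi (βsr σ2 α2 Rbar : ℝ)
    (hβsr : 0 < βsr) (hσ2 : 0 < σ2) (hα2 : 0 < α2) (hR : 0 < Rbar) :
    (∀ s1 s2 : ℝ, 0 ≤ s1 → s1 < s2 →
      (⨅ τ : Set.Ioo (0:ℝ) 1, ((τ : ℝ) * ((2:ℝ) ^ (Rbar / (τ : ℝ)) - 1) * (s1 + σ2) / βsr
          + (1 - (τ : ℝ)) * ((2:ℝ) ^ (Rbar / (1 - (τ : ℝ))) - 1) / α2))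
        < (⨅ τ : Set.Ioo (0:ℝ) 1, ((τ : ℝ) * ((2:ℝ) ^ (Rbar / (τ : ℝ)) - 1) * (s2 + σ2) / βsr
          + (1 - (τ : ℝ)) * ((2:ℝ) ^ (Rbar / (1 - (τ : ℝ))) - 1) / α2))) ∧
    Filter.Tendsto (fun s : ℝ =>
        ⨅ τ : Set.Ioo (0:ℝ) 1, ((τ : ℝ) * ((2:ℝ) ^ (Rbar / (τ : ℝ)) - 1) * (s + σ2) / βsr
          + (1 - (τ : ℝ)) * ((2:ℝ) ^ (Rbar / (1 - (τ : ℝ))) - 1) / α2))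
      Filter.atTop Filter.atTop ∧
    (∀ s : ℝ, 0 ≤ s →
      s * (⨅ τ : Set.Ioo (0:ℝ) 1, (τ : ℝ) * ((2:ℝ) ^ (Rbar / (τ : ℝ)) - 1)) / βsr
        ≤ ⨅ τ : Set.Ioo (0:ℝ) 1, ((τ : ℝ) * ((2:ℝ) ^ (Rbar / (τ : ℝ)) - 1) * (s + σ2) / βsr
          + (1 - (τ : ℝ)) * ((2:ℝ) ^ (Rbar / (1 - (τ : ℝ))) - 1) / α2)) := by
  haveI : Nonempty (Set.Ioo (0:ℝ) 1) := ⟨⟨1/2, by norm_num, by norm_num⟩⟩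
  set g : Set.Ioo (0:ℝ) 1 → ℝ := fun τ => (τ : ℝ) * ((2:ℝ) ^ (Rbar / (τ : ℝ)) - 1) with hg
  set B : Set.Ioo (0:ℝ) 1 → ℝ :=
    fun τ => (1 - (τ : ℝ)) * ((2:ℝ) ^ (Rbar / (1 - (τ : ℝ))) - 1) / α2 with hB
  set f : ℝ → Set.Ioo (0:ℝ) 1 → ℝ := fun s τ => g τ * (s + σ2) / βsr + B τ with hf
  have hlog2 : (0:ℝ) < Real.log 2 := Real.log_pos (by norm_num)
  -- g τ ≥ Rbar * log 2 > 0
  have hgle : ∀ τ : Set.Ioo (0:ℝ) 1, Rbar * Real.log 2 ≤ g τ := by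
    intro ⟨τ, hτ0, hτ1⟩
    have hx : 0 ≤ Rbar / τ := le_of_lt (div_pos hR hτ0)
    have := rpow_sub_one_ge (Rbar / τ) hx
    have h2 : τ * (Real.log 2 * (Rbar / τ)) ≤ τ * ((2:ℝ) ^ (Rbar / τ) - 1) :=
      mul_le_mul_of_nonneg_left this (le_of_lt hτ0)
    calc Rbar * Real.log 2 = τ * (Real.log 2 * (Rbar / τ)) := by
          field_simp
      _ ≤ _ := h2
  have hgpos : ∀ τ : Set.Ioo (0:ℝ) 1, 0 < g τ := fun τ =>
    lt_of_lt_of_le (mul_pos hR hlog2) (hgle τ)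
  have hBnn : ∀ τ : Set.Ioo (0:ℝ) 1, 0 ≤ B τ := by
    intro ⟨τ, hτ0, hτ1⟩
    have h1τ : (0:ℝ) < 1 - τ := by linarith
    have hx : 0 ≤ Rbar / (1 - τ) := le_of_lt (div_pos hR h1τ)
    have := rpow_sub_one_ge (Rbar / (1 - τ)) hx
    have : (0:ℝ) ≤ (2:ℝ) ^ (Rbar / (1 - τ)) - 1 :=
      le_trans (mul_nonneg (le_of_lt hlog2) hx) this
    positivity
  have hfnn : ∀ s : ℝ, 0 ≤ s → ∀ τ : Set.Ioo (0:ℝ) 1, 0 ≤ f s τ := by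
    intro s hs τ
    have : 0 ≤ g τ * (s + σ2) / βsr :=
      div_nonneg (mul_nonneg (hgpos τ).le (by linarith)) hβsr.le
    simp only [hf]; linarith [hBnn τ]
  have hbdd : ∀ s : ℝ, 0 ≤ s → BddBelow (Set.range (f s)) := by
    intro s hs
    exact ⟨0, by rintro x ⟨τ, rfl⟩; exact hfnn s hs τ⟩
  refine ⟨?_, ?_, ?_⟩
  · -- strict monotonicity
    intro s1 s2 hs1 hlt
    have hδ : 0 < (s2 - s1) * (Rbar * Real.log 2) / βsr := by
      exact div_pos (mul_pos (by linarith) (mul_pos hR hlog2)) hβsr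
    have key : ∀ τ : Set.Ioo (0:ℝ) 1,
        (⨅ τ', f s1 τ') + (s2 - s1) * (Rbar * Real.log 2) / βsr ≤ f s2 τ := by
      intro τ
      have h1 : (⨅ τ', f s1 τ') ≤ f s1 τ := ciInf_le (hbdd s1 hs1) τ
      have h2 : f s2 τ = f s1 τ + g τ * (s2 - s1) / βsr := by
        simp only [hf]; field_simp; ring
      have h3 : (s2 - s1) * (Rbar * Real.log 2) / βsr ≤ g τ * (s2 - s1) / βsr := by
        apply div_le_div_of_nonneg_right _ hβsr.le
        calc (s2 - s1) * (Rbar * Real.log 2) = (Rbar * Real.log 2) * (s2 - s1) := by ring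
          _ ≤ g τ * (s2 - s1) := mul_le_mul_of_nonneg_right (hgle τ) (by linarith)
      rw [h2]; exact add_le_add h1 h3
    have := le_ciInf key
    calc (⨅ τ', f s1 τ') < (⨅ τ', f s1 τ') + (s2 - s1) * (Rbar * Real.log 2) / βsr := by
          linarith
      _ ≤ ⨅ τ, f s2 τ := this
  · -- tendsto atTop
    have hL : Tendsto (fun s : ℝ => Rbar * Real.log 2 / βsr * s) atTop atTop :=
      Tendsto.const_mul_atTop (by positivity) tendsto_id
    apply tendsto_atTop_mono' atTop _ hL
    filter_upwards [eventually_ge_atTop (0:ℝ)] with s hs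
    apply le_ciInf
    intro τ
    show Rbar * Real.log 2 / βsr * s ≤ f s τ
    have h1 : Rbar * Real.log 2 / βsr * s ≤ g τ * (s + σ2) / βsr := by
      rw [div_mul_eq_mul_div]
      apply div_le_div_of_nonneg_right _ hβsr.le
      calc Rbar * Real.log 2 * s ≤ g τ * s :=
            mul_le_mul_of_nonneg_right (hgle τ) hs
        _ ≤ g τ * (s + σ2) :=
            mul_le_mul_of_nonneg_left (by linarith) (le_of_lt (hgpos τ))
    have := hBnn τ
    simp only [hf]; linarith
  · -- linear lower bound
    intro s hs
    apply le_ciInf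
    intro τ
    show s * (⨅ τ', g τ') / βsr ≤ f s τ
    have hbddg : BddBelow (Set.range g) :=
      ⟨0, by rintro x ⟨τ', rfl⟩; exact le_of_lt (hgpos τ')⟩
    have h1 : (⨅ τ', g τ') ≤ g τ := ciInf_le hbddg τ
    have h2 : s * (⨅ τ', g τ') ≤ g τ * (s + σ2) := by
      calc s * (⨅ τ', g τ') ≤ s * g τ := mul_le_mul_of_nonneg_left h1 hs
        _ = g τ * s := by ring
        _ ≤ g τ * (s + σ2) :=
            mul_le_mul_of_nonneg_left (by linarith) (le_of_lt (hgpos τ))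
    have h3 : s * (⨅ τ', g τ') / βsr ≤ g τ * (s + σ2) / βsr :=
      div_le_div_of_nonneg_right h2 hβsr.le
    have := hBnn τ
    simp only [hf]; linarith
end
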